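/- Let d ≥ 2 and for each i ∈ {1, …, d} let (b_{n,i})_{n∈ℕ} be a sequence of pairwise coprime positive integers. Then the density of the set ℤ^d \ ⋃_{n∈ℕ} (b_{n,1}ℤ × ⋯ × b_{n,d}ℤ) with respect to the Følner sequence of boxes Φ_N = {−N, …, N}^d in (ℤ^d, +) exists and equals ∏_{n∈ℕ} (1 − 1/(b_{n,1} b_{n,2} ⋯ b_{n,d})). -/

import Mathlib

open Filter

section MBDAux

open Finset

private lemma MBD.tendsto_inv2N : Tendsto (fun N : ℕ => (2*(N:ℝ)+1)⁻¹) atTop (nhds 0) := by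
  have h1 : Tendsto (fun x : ℝ => 2*x+1) atTop atTop :=
    tendsto_atTop_add_const_right atTop 1 (tendsto_id.const_mul_atTop two_pos)
  exact (h1.comp tendsto_natCast_atTop_atTop).inv_tendsto_atTop

private lemma MBD.count_dvd (m N : ℕ) (hm : 0 < m) :
    ((Finset.Icc (-(N:ℤ)) (N:ℤ)).filter (fun x => (m:ℤ) ∣ x)).card = 2*(N/m)+1 := by
  classical
  have hm' : (0:ℤ) < m := by exact_mod_cast hm
  have hdm : ∀ k : ℤ, k ≤ (N:ℤ)/(m:ℤ) ↔ k * m ≤ N := fun k => Int.le_ediv_iff_mul_le hm'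
  have hcast : (((N/m : ℕ)) : ℤ) = (N:ℤ)/(m:ℤ) := by norm_cast
  have h : (Finset.Icc (-((N/m : ℕ):ℤ)) ((N/m : ℕ):ℤ)).image (fun k : ℤ => k * (m:ℤ)) =
      (Finset.Icc (-(N:ℤ)) (N:ℤ)).filter (fun x => (m:ℤ) ∣ x) := by
    ext x
    simp only [Finset.mem_image, Finset.mem_filter, Finset.mem_Icc]
    constructor
    · rintro ⟨k, ⟨hk1, hk2⟩, rfl⟩
      rw [hcast] at hk1 hk2
      refine ⟨⟨?_, (hdm k).1 hk2⟩, Dvd.intro_left k rfl⟩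
      have := (hdm (-k)).1 (by omega)
      rw [neg_mul] at this
      omega
    · rintro ⟨⟨h1, h2⟩, k, rfl⟩
      have hc : (m:ℤ)*k = k*(m:ℤ) := mul_comm _ _
      refine ⟨k, ⟨?_, ?_⟩, mul_comm k (m:ℤ)⟩
      · rw [hcast]
        have := (hdm (-k)).2 (by rw [neg_mul]; omega)
        omega
      · rw [hcast]
        exact (hdm k).2 (by omega)
  rw [← h, Finset.card_image_of_injective _ (mul_left_injective₀ hm'.ne'), Int.card_Icc]
  have : ((N/m : ℕ):ℤ) + 1 - -((N/m : ℕ):ℤ) = ((2*(N/m)+1 : ℕ) : ℤ) := by push_cast; ring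
  rw [this, Int.toNat_natCast]

private lemma MBD.filter_piFinset_card {d : ℕ} (s : Fin d → Finset ℤ) (p : Fin d → ℤ → Prop)
    [∀ i, DecidablePred (p i)] :
    ((Fintype.piFinset s).filter (fun x => ∀ i, p i (x i))).card
      = ∏ i, ((s i).filter (fun y => p i y)).card := by
  classical
  rw [← Fintype.card_piFinset]
  congr 1
  ext x
  simp [Fintype.mem_piFinset, Finset.mem_filter, forall_and]

private lemma MBD.hasProd_iInf {f : ℕ → ℝ} (h0 : ∀ n, 0 ≤ f n) (h1 : ∀ n, f n ≤ 1) :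
    HasProd f (⨅ M : ℕ, ∏ n ∈ Finset.range M, f n) := by
  have hg0 : ∀ F : Finset ℕ, 0 ≤ ∏ n ∈ F, f n := fun F => Finset.prod_nonneg fun n _ => h0 n
  have hant : Antitone (fun F : Finset ℕ => ∏ n ∈ F, f n) := by
    intro F F' h
    dsimp only
    rw [← Finset.prod_sdiff h]
    exact mul_le_of_le_one_left (hg0 F)
      (Finset.prod_le_one (fun n _ => h0 n) (fun n _ => h1 n))
  have hbdd : BddBelow (Set.range fun F : Finset ℕ => ∏ n ∈ F, f n) :=
    ⟨0, by rintro _ ⟨F, rfl⟩; exact hg0 F⟩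
  have hbdd' : BddBelow (Set.range fun M : ℕ => ∏ n ∈ Finset.range M, f n) :=
    ⟨0, by rintro _ ⟨M, rfl⟩; exact hg0 _⟩
  have ht := tendsto_atTop_ciInf hant hbdd
  have heq : (⨅ F : Finset ℕ, ∏ n ∈ F, f n) = ⨅ M : ℕ, ∏ n ∈ Finset.range M, f n := by
    apply le_antisymm
    · exact le_ciInf fun M => ciInf_le hbdd _
    · refine le_ciInf fun F => ?_
      obtain ⟨M, hM⟩ := F.exists_nat_subset_range
      exact le_trans (ciInf_le hbdd' M) (hant hM)
  rw [heq] at ht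
  exact ht

private lemma MBD.tendsto_ratio (m : ℕ) (hm : 0 < m) :
    Tendsto (fun N : ℕ => ((2*(N/m)+1 : ℕ) : ℝ)/(2*(N:ℝ)+1)) atTop (nhds (1/(m:ℝ))) := by
  have hm' : (0:ℝ) < m := by exact_mod_cast hm
  have key : ∀ N : ℕ, ‖((2*(N/m)+1 : ℕ) : ℝ)/(2*(N:ℝ)+1) - 1/(m:ℝ)‖ ≤ (2*(N:ℝ)+1)⁻¹ := by
    intro N
    have hN : (0:ℝ) < 2*(N:ℝ)+1 := by positivity
    have hdm := Nat.div_add_mod N m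
    have hmod := Nat.mod_lt N hm
    have h1 : (m:ℝ) * ((N/m : ℕ):ℝ) ≤ (N:ℝ) := by exact_mod_cast (by omega : m*(N/m) ≤ N)
    have h2 : (N:ℝ) + 1 ≤ (m:ℝ) * ((N/m:ℕ):ℝ) + m := by
      exact_mod_cast (by omega : N + 1 ≤ m*(N/m) + m)
    have heq : ((2*(N/m)+1 : ℕ) : ℝ)/(2*(N:ℝ)+1) - 1/(m:ℝ)
        = ((m:ℝ)*(2*((N/m:ℕ):ℝ)+1) - (2*(N:ℝ)+1))/((m:ℝ)*(2*(N:ℝ)+1)) := by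
      push_cast
      field_simp
    rw [Real.norm_eq_abs, heq, abs_div, abs_of_pos (mul_pos hm' hN)]
    have hrw : (2*(N:ℝ)+1)⁻¹ = (m:ℝ)/((m:ℝ)*(2*(N:ℝ)+1)) := by field_simp
    rw [hrw]
    apply (div_le_div_iff_of_pos_right (mul_pos hm' hN)).2
    have hexp : (m:ℝ)*(2*((N/m:ℕ):ℝ)+1) = 2*((m:ℝ)*((N/m:ℕ):ℝ)) + m := by ring
    rw [abs_le, hexp]
    constructor <;> linarith
  have h := squeeze_zero_norm key MBD.tendsto_inv2N
  have h2 := h.add_const (1/(m:ℝ))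
  simpa using h2

private lemma MBD.card_inter {d : ℕ} (b : ℕ → Fin d → ℕ) (hpos : ∀ n i, 0 < b n i)
    (hcop : ∀ i : Fin d, ∀ m n, m ≠ n → Nat.Coprime (b m i) (b n i))
    (N : ℕ) (T : Finset ℕ) :
    ((Fintype.piFinset fun _ : Fin d => Finset.Icc (-(N:ℤ)) (N:ℤ)).filter
      (fun x : Fin d → ℤ => ∀ n ∈ T, ∀ i, (b n i : ℤ) ∣ x i)).card
    = ∏ i : Fin d, (2*(N/(∏ n ∈ T, b n i))+1) := by
  classical
  have hiff : ∀ x : Fin d → ℤ, (∀ n ∈ T, ∀ i, (b n i:ℤ) ∣ x i) ↔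
      (∀ i, ((∏ n ∈ T, b n i : ℕ):ℤ) ∣ x i) := by
    intro x
    constructor
    · intro h i
      rw [Nat.cast_prod]
      apply Finset.prod_dvd_of_coprime
      · intro m hm n hn hmn
        exact Nat.isCoprime_iff_coprime.2 (hcop i m n hmn)
      · exact fun n hn => h n hn i
    · intro h n hn i
      exact dvd_trans (Int.natCast_dvd_natCast.2 (Finset.dvd_prod_of_mem (fun n => b n i) hn))
        (h i)
  rw [Finset.filter_congr (fun x _ => hiff x)]
  rw [MBD.filter_piFinset_card]
  refine Finset.prod_congr rfl fun i _ => ?_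
  exact MBD.count_dvd _ N (Finset.prod_pos fun n _ => hpos n i)

private lemma MBD.IE {d : ℕ} (b : ℕ → Fin d → ℕ) (hpos : ∀ n i, 0 < b n i)
    (hcop : ∀ i : Fin d, ∀ m n, m ≠ n → Nat.Coprime (b m i) (b n i)) (N M : ℕ) :
    (((Fintype.piFinset fun _ : Fin d => Finset.Icc (-(N:ℤ)) (N:ℤ)).filter
      (fun x : Fin d → ℤ => ∀ n ∈ Finset.range M, ¬ ∀ i, (b n i : ℤ) ∣ x i)).card : ℝ)
    = ∑ T ∈ (Finset.range M).powerset,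
        (-1:ℝ)^T.card * ∏ i : Fin d, ((2*(N/(∏ n ∈ T, b n i))+1 : ℕ) : ℝ) := by
  classical
  rw [Finset.card_filter]
  push_cast
  have step : ∀ x ∈ (Fintype.piFinset fun _ : Fin d => Finset.Icc (-(N:ℤ)) (N:ℤ)),
      ((if (∀ n ∈ Finset.range M, ¬∀ i, (b n i:ℤ) ∣ x i) then (1:ℝ) else 0))
      = ∑ T ∈ (Finset.range M).powerset, (-1:ℝ)^T.card *
          (if (∀ n ∈ T, ∀ i, (b n i:ℤ) ∣ x i) then (1:ℝ) else 0) := by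
    intro x _
    have expand : (if (∀ n ∈ Finset.range M, ¬∀ i, (b n i:ℤ) ∣ x i) then (1:ℝ) else 0)
        = ∏ n ∈ Finset.range M, ((if (∀ i, (b n i:ℤ) ∣ x i) then (-1:ℝ) else 0) + 1) := by
      by_cases hP : ∀ n ∈ Finset.range M, ¬∀ i, (b n i:ℤ) ∣ x i
      · rw [if_pos hP]
        symm
        apply Finset.prod_eq_one
        intro n hn
        rw [if_neg (hP n hn), zero_add]
      · rw [if_neg hP]
        push_neg at hP
        obtain ⟨n, hn, hA⟩ := hP
        symm
        refine Finset.prod_eq_zero hn ?_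
        rw [if_pos hA]
        norm_num
    rw [expand, Finset.prod_add]
    refine Finset.sum_congr rfl fun T hT => ?_
    rw [Finset.prod_const_one, mul_one]
    by_cases h : ∀ n ∈ T, ∀ i, (b n i:ℤ) ∣ x i
    · rw [if_pos h, mul_one]
      calc ∏ n ∈ T, (if (∀ i, (b n i:ℤ) ∣ x i) then (-1:ℝ) else 0)
          = ∏ _n ∈ T, (-1:ℝ) := Finset.prod_congr rfl fun n hn => if_pos (h n hn)
        _ = (-1:ℝ)^T.card := Finset.prod_const _
    · rw [if_neg h, mul_zero]
      push_neg at h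
      obtain ⟨n, hn, hA⟩ := h
      exact Finset.prod_eq_zero hn (if_neg (by push_neg; exact hA))
  rw [Finset.sum_congr rfl step, Finset.sum_comm]
  refine Finset.sum_congr rfl fun T hT => ?_
  rw [← Finset.mul_sum, Finset.sum_boole]
  congr 1
  rw [MBD.card_inter b hpos hcop N T]
  push_cast
  ring

private lemma MBD.tendsto_gM {d : ℕ} (b : ℕ → Fin d → ℕ) (hpos : ∀ n i, 0 < b n i)
    (hcop : ∀ i : Fin d, ∀ m n, m ≠ n → Nat.Coprime (b m i) (b n i)) (M : ℕ) :
    Tendsto (fun N : ℕ =>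
      (((Fintype.piFinset fun _ : Fin d => Finset.Icc (-(N:ℤ)) (N:ℤ)).filter
        (fun x : Fin d → ℤ => ∀ n ∈ Finset.range M, ¬ ∀ i, (b n i : ℤ) ∣ x i)).card : ℝ)
        / (2*(N:ℝ)+1)^d) atTop
      (nhds (∏ n ∈ Finset.range M, (1 - 1/((∏ i : Fin d, b n i : ℕ) : ℝ)))) := by
  classical
  have hL : ∀ T : Finset ℕ, ∀ i : Fin d, 0 < ∏ n ∈ T, b n i :=
    fun T i => Finset.prod_pos fun n _ => hpos n i
  have hterm : ∀ T ∈ (Finset.range M).powerset, Tendsto (fun N : ℕ =>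
      (-1:ℝ)^T.card * ∏ i : Fin d, (((2*(N/(∏ n ∈ T, b n i))+1 : ℕ):ℝ)/(2*(N:ℝ)+1)))
      atTop (nhds ((-1:ℝ)^T.card * ∏ i : Fin d, 1/((∏ n ∈ T, b n i : ℕ):ℝ))) := by
    intro T _
    exact tendsto_const_nhds.mul (tendsto_finset_prod _ fun i _ => MBD.tendsto_ratio _ (hL T i))
  have hsum := tendsto_finset_sum _ hterm
  have hfun : ∀ N : ℕ,
      (((Fintype.piFinset fun _ : Fin d => Finset.Icc (-(N:ℤ)) (N:ℤ)).filter
        (fun x : Fin d → ℤ => ∀ n ∈ Finset.range M, ¬ ∀ i, (b n i : ℤ) ∣ x i)).card : ℝ)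
        / (2*(N:ℝ)+1)^d
      = ∑ T ∈ (Finset.range M).powerset,
          (-1:ℝ)^T.card * ∏ i : Fin d, (((2*(N/(∏ n ∈ T, b n i))+1 : ℕ):ℝ)/(2*(N:ℝ)+1)) := by
    intro N
    rw [MBD.IE b hpos hcop N M, Finset.sum_div]
    refine Finset.sum_congr rfl fun T _ => ?_
    rw [mul_div_assoc]
    congr 1
    rw [Finset.prod_div_distrib, Finset.prod_const, Finset.card_univ, Fintype.card_fin]
  have hval : ∑ T ∈ (Finset.range M).powerset,
      (-1:ℝ)^T.card * ∏ i : Fin d, 1/((∏ n ∈ T, b n i : ℕ):ℝ)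
      = ∏ n ∈ Finset.range M, (1 - 1/((∏ i : Fin d, b n i : ℕ) : ℝ)) := by
    have h1 : ∀ n : ℕ, (1 - 1/((∏ i : Fin d, b n i : ℕ):ℝ))
        = (-(1/((∏ i : Fin d, b n i : ℕ):ℝ)) + 1) := fun n => by ring
    rw [Finset.prod_congr rfl fun n _ => h1 n, Finset.prod_add]
    symm
    refine Finset.sum_congr rfl fun T _ => ?_
    rw [Finset.prod_const_one, mul_one]
    have h2 : ∏ n ∈ T, (-(1/((∏ i : Fin d, b n i : ℕ):ℝ)))
        = (-1:ℝ)^T.card * ∏ n ∈ T, 1/((∏ i : Fin d, b n i : ℕ):ℝ) := by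
      calc ∏ n ∈ T, (-(1/((∏ i : Fin d, b n i : ℕ):ℝ)))
          = ∏ n ∈ T, ((-1) * (1/((∏ i : Fin d, b n i : ℕ):ℝ))) :=
            Finset.prod_congr rfl (by intros; ring)
        _ = (∏ _n ∈ T, (-1:ℝ)) * ∏ n ∈ T, 1/((∏ i : Fin d, b n i : ℕ):ℝ) :=
            Finset.prod_mul_distrib
        _ = (-1:ℝ)^T.card * ∏ n ∈ T, 1/((∏ i : Fin d, b n i : ℕ):ℝ) := by
            rw [Finset.prod_const]
    rw [h2]
    congr 1
    simp only [one_div, Nat.cast_prod, ← Finset.prod_inv_distrib]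
    exact Finset.prod_comm
  rw [hval] at hsum
  exact Tendsto.congr (fun N => (hfun N).symm) hsum

open Classical in
private lemma MBD.lower {d : ℕ} (b : ℕ → Fin d → ℕ) (hpos : ∀ n i, 0 < b n i)
    (hcop : ∀ i : Fin d, ∀ m n, m ≠ n → Nat.Coprime (b m i) (b n i))
    (hB2 : ∀ n, 2 ≤ ∏ i : Fin d, b n i)
    (hsum : Summable fun n => 1/((∏ i : Fin d, b n i : ℕ):ℝ)) (M N : ℕ) :
    ((((Fintype.piFinset fun _ : Fin d => Finset.Icc (-(N:ℤ)) (N:ℤ)).filter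
        (fun x : Fin d → ℤ => ∀ n ∈ Finset.range M, ¬ ∀ i, (b n i : ℤ) ∣ x i)).card : ℝ)
      - (((Fintype.piFinset fun _ : Fin d => Finset.Icc (-(N:ℤ)) (N:ℤ)).filter
        (fun x : Fin d → ℤ => ¬ ∃ n : ℕ, ∀ i : Fin d, (b n i : ℤ) ∣ x i)).card : ℝ))
      ≤ (d:ℝ) * (2*(N:ℝ)+1)^(d-1)
        + 2^d * (2*(N:ℝ)+1)^d * ∑' k, 1/((∏ i : Fin d, b (k+M) i : ℕ):ℝ) := by
  classical
  set box : Finset (Fin d → ℤ) := Fintype.piFinset fun _ : Fin d => Finset.Icc (-(N:ℤ)) (N:ℤ)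
    with hbox
  have hKfin : {n : ℕ | M ≤ n ∧ ∀ i, b n i ≤ N}.Finite := by
    apply Set.Finite.of_finite_image (f := fun n => (fun i => b n i))
    · apply Set.Finite.subset (Set.Finite.pi (fun _ : Fin d => Set.finite_Icc 1 N))
      rintro _ ⟨n, ⟨_, hn2⟩, rfl⟩
      intro i _
      exact ⟨hpos n i, hn2 i⟩
    · rintro m ⟨hm1, hm2⟩ n ⟨hn1, hn2⟩ heq
      by_contra hmn
      have hone : ∀ i, b m i = 1 := by
        intro i
        have hc := hcop i m n hmn
        have he : b m i = b n i := congrFun heq i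
        rw [he] at hc
        rw [Nat.Coprime, Nat.gcd_self] at hc
        omega
      have h2 := hB2 m
      rw [Finset.prod_eq_one (fun i _ => hone i)] at h2
      omega
  set K : Finset ℕ := hKfin.toFinset with hK
  set FM : Finset (Fin d → ℤ) :=
    box.filter (fun x => ∀ n ∈ Finset.range M, ¬ ∀ i, (b n i : ℤ) ∣ x i) with hFM
  set FF : Finset (Fin d → ℤ) :=
    box.filter (fun x => ¬ ∃ n : ℕ, ∀ i : Fin d, (b n i : ℤ) ∣ x i) with hFF
  have hsubset : FF ⊆ FM := by
    apply Finset.monotone_filter_right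
    intro x _ hne n _ hA
    exact hne ⟨n, hA⟩
  have hsub : FM \ FF ⊆
      (box.filter fun x => ∃ i, x i = 0) ∪
        K.biUnion (fun n => box.filter fun x => ∀ i, (b n i:ℤ) ∣ x i) := by
    intro x hx
    rw [Finset.mem_sdiff, hFM, hFF, Finset.mem_filter, Finset.mem_filter] at hx
    obtain ⟨⟨hxbox, hxM⟩, hx2⟩ := hx
    have hex : ∃ n, ∀ i, (b n i:ℤ) ∣ x i := by
      by_contra hne
      exact hx2 ⟨hxbox, hne⟩
    obtain ⟨n, hn⟩ := hex
    have hnM : M ≤ n := by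
      by_contra h
      push_neg at h
      exact hxM n (Finset.mem_range.2 h) hn
    by_cases hz : ∃ i, x i = 0
    · exact Finset.mem_union_left _ (Finset.mem_filter.2 ⟨hxbox, hz⟩)
    · push_neg at hz
      refine Finset.mem_union_right _
        (Finset.mem_biUnion.2 ⟨n, ?_, Finset.mem_filter.2 ⟨hxbox, hn⟩⟩)
      rw [hK, Set.Finite.mem_toFinset]
      refine ⟨hnM, fun i => ?_⟩
      have h3 : (b n i:ℤ) ≤ |x i| :=
        Int.le_of_dvd (abs_pos.2 (hz i)) ((dvd_abs _ _).2 (hn i))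
      have h4 : |x i| ≤ (N:ℤ) := by
        have hmem := Fintype.mem_piFinset.1 hxbox i
        rw [Finset.mem_Icc] at hmem
        rw [abs_le]
        exact hmem
      exact_mod_cast h3.trans h4
  have hcardi : ∀ i : Fin d, (box.filter (fun x => x i = 0)).card = (2*N+1)^(d-1) := by
    intro i
    have hiff : ∀ x : Fin d → ℤ, (x i = 0) ↔ ∀ j, (j = i → x j = 0) :=
      fun x => ⟨fun h j hj => hj ▸ h, fun h => h i rfl⟩
    rw [hbox, Finset.filter_congr (fun x _ => hiff x),
      MBD.filter_piFinset_card _ (fun j y => j = i → y = 0)]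
    rw [← Finset.prod_erase_mul _ _ (Finset.mem_univ i)]
    have hic : ((Finset.Icc (-(N:ℤ)) (N:ℤ)).filter (fun y => i = i → y = 0)).card = 1 := by
      have hset : (Finset.Icc (-(N:ℤ)) (N:ℤ)).filter (fun y => i = i → y = 0) = {0} := by
        ext y
        constructor
        · intro hy
          rw [Finset.mem_singleton]
          exact (Finset.mem_filter.1 hy).2 rfl
        · intro hy
          rw [Finset.mem_singleton] at hy
          subst hy
          rw [Finset.mem_filter, Finset.mem_Icc]
          exact ⟨⟨by omega, by omega⟩, fun _ => rfl⟩
      rw [hset, Finset.card_singleton]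
    rw [hic, mul_one]
    have hothers : ∀ j ∈ Finset.univ.erase i,
        ((Finset.Icc (-(N:ℤ)) (N:ℤ)).filter (fun y => j = i → y = 0)).card = 2*N+1 := by
      intro j hj
      rw [Finset.filter_true_of_mem (fun y _ hji => absurd hji (Finset.ne_of_mem_erase hj))]
      rw [Int.card_Icc]
      have hcast : ((N:ℤ)+1 - -(N:ℤ)) = ((2*N+1 : ℕ):ℤ) := by push_cast; ring
      rw [hcast, Int.toNat_natCast]
    rw [Finset.prod_congr rfl hothers, Finset.prod_const,
      Finset.card_erase_of_mem (Finset.mem_univ i), Finset.card_univ, Fintype.card_fin]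
  have hzero : ((box.filter fun x => ∃ i, x i = 0).card : ℝ) ≤ (d:ℝ) * (2*(N:ℝ)+1)^(d-1) := by
    have hsub2 : box.filter (fun x => ∃ i, x i = 0) ⊆
        Finset.univ.biUnion (fun i : Fin d => box.filter (fun x => x i = 0)) := by
      intro x hx
      rw [Finset.mem_filter] at hx
      obtain ⟨hxb, i, hi⟩ := hx
      exact Finset.mem_biUnion.2 ⟨i, Finset.mem_univ i, Finset.mem_filter.2 ⟨hxb, hi⟩⟩
    have hnat : (box.filter (fun x => ∃ i, x i = 0)).card ≤ d * (2*N+1)^(d-1) :=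
      calc (box.filter (fun x => ∃ i, x i = 0)).card
          ≤ (Finset.univ.biUnion (fun i : Fin d => box.filter (fun x => x i = 0))).card :=
            Finset.card_le_card hsub2
        _ ≤ ∑ i : Fin d, (box.filter (fun x => x i = 0)).card := Finset.card_biUnion_le
        _ = d * (2*N+1)^(d-1) := by
            rw [Finset.sum_congr rfl (fun i _ => hcardi i), Finset.sum_const, Finset.card_univ,
              Fintype.card_fin, smul_eq_mul]
    calc ((box.filter fun x => ∃ i, x i = 0).card : ℝ)
        ≤ ((d * (2*N+1)^(d-1) : ℕ):ℝ) := Nat.cast_le.2 hnat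
      _ = (d:ℝ)*(2*(N:ℝ)+1)^(d-1) := by push_cast; ring
  have hKbound : ∀ n ∈ K, ((box.filter fun x => ∀ i, (b n i:ℤ) ∣ x i).card : ℝ)
      ≤ 2^d * (2*(N:ℝ)+1)^d * (1/((∏ i : Fin d, b n i : ℕ):ℝ)) := by
    intro n hnK
    rw [hK, Set.Finite.mem_toFinset] at hnK
    obtain ⟨hnM, hnb⟩ := hnK
    have hcard : (box.filter fun x : Fin d → ℤ => ∀ i, (b n i:ℤ) ∣ x i).card
        = ∏ i : Fin d, (2*(N/(b n i))+1) := by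
      rw [hbox, MBD.filter_piFinset_card]
      exact Finset.prod_congr rfl fun i _ => MBD.count_dvd _ N (hpos n i)
    rw [hcard]
    push_cast
    calc ∏ i : Fin d, (2*((N/(b n i) : ℕ):ℝ)+1)
        ≤ ∏ i : Fin d, (2*(2*(N:ℝ)+1)/(b n i : ℝ)) := by
          apply Finset.prod_le_prod (fun i _ => by positivity)
          intro i _
          rw [le_div_iff₀ (show (0:ℝ) < (b n i : ℝ) by exact_mod_cast hpos n i)]
          have hb := hnb i
          have hdm := Nat.div_add_mod N (b n i)
          have hkey : (2*(N/(b n i))+1) * (b n i) ≤ 2*(2*N+1) := by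
            have h1 : (2*(N/(b n i))+1) * (b n i) = 2*((b n i)*(N/(b n i))) + b n i := by ring
            have h2 : (b n i)*(N/(b n i)) ≤ N := Nat.le.intro hdm
            rw [h1]
            linarith
          have hc := (Nat.cast_le (α := ℝ)).2 hkey
          push_cast at hc
          linarith
      _ = 2^d * (2*(N:ℝ)+1)^d * (1/(∏ i : Fin d, (b n i : ℝ))) := by
          rw [Finset.prod_div_distrib, Finset.prod_const, Finset.card_univ, Fintype.card_fin,
            mul_pow]
          ring
  have hshift : Summable fun k => 1/((∏ i : Fin d, b (k+M) i : ℕ):ℝ) :=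
    (summable_nat_add_iff M).2 hsum
  have hKsum : ∑ n ∈ K, (1/((∏ i : Fin d, b n i : ℕ):ℝ))
      ≤ ∑' k, 1/((∏ i : Fin d, b (k+M) i : ℕ):ℝ) := by
    have hinj : ∀ x ∈ K, ∀ y ∈ K, x - M = y - M → x = y := by
      intro x hx y hy hxy
      rw [hK, Set.Finite.mem_toFinset] at hx hy
      have h1 : M ≤ x := hx.1
      have h2 : M ≤ y := hy.1
      omega
    have himg : ∑ k ∈ K.image (· - M), 1/((∏ i : Fin d, b (k+M) i : ℕ):ℝ)
        = ∑ n ∈ K, (1/((∏ i : Fin d, b n i : ℕ):ℝ)) := by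
      rw [Finset.sum_image hinj]
      refine Finset.sum_congr rfl fun n hn => ?_
      rw [hK, Set.Finite.mem_toFinset] at hn
      rw [Nat.sub_add_cancel hn.1]
    rw [← himg]
    exact hshift.sum_le_tsum _ (fun k _ => by positivity)
  have hle : FF.card ≤ FM.card := Finset.card_le_card hsubset
  calc (FM.card : ℝ) - FF.card
      = ((FM.card - FF.card : ℕ):ℝ) := by rw [Nat.cast_sub hle]
    _ = ((FM \ FF).card : ℝ) := by rw [Finset.card_sdiff_of_subset hsubset]
    _ ≤ (((box.filter fun x => ∃ i, x i = 0) ∪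
          K.biUnion (fun n => box.filter fun x => ∀ i, (b n i:ℤ) ∣ x i)).card : ℝ) :=
        Nat.cast_le.2 (Finset.card_le_card hsub)
    _ ≤ ((box.filter fun x => ∃ i, x i = 0).card : ℝ)
        + ((K.biUnion (fun n => box.filter fun x => ∀ i, (b n i:ℤ) ∣ x i)).card : ℝ) := by
        exact_mod_cast Finset.card_union_le _ _
    _ ≤ ((box.filter fun x => ∃ i, x i = 0).card : ℝ)
        + ∑ n ∈ K, ((box.filter fun x => ∀ i, (b n i:ℤ) ∣ x i).card : ℝ) := by
        refine add_le_add le_rfl ?_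
        calc ((K.biUnion (fun n => box.filter fun x => ∀ i, (b n i:ℤ) ∣ x i)).card : ℝ)
            ≤ ((∑ n ∈ K, (box.filter fun x => ∀ i, (b n i:ℤ) ∣ x i).card : ℕ) : ℝ) :=
              Nat.cast_le.2 Finset.card_biUnion_le
          _ = ∑ n ∈ K, ((box.filter fun x => ∀ i, (b n i:ℤ) ∣ x i).card : ℝ) := by
              push_cast; rfl
    _ ≤ (d:ℝ) * (2*(N:ℝ)+1)^(d-1)
        + ∑ n ∈ K, (2^d * (2*(N:ℝ)+1)^d * (1/((∏ i : Fin d, b n i : ℕ):ℝ))) := by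
        exact add_le_add hzero (Finset.sum_le_sum hKbound)
    _ = (d:ℝ) * (2*(N:ℝ)+1)^(d-1)
        + 2^d * (2*(N:ℝ)+1)^d * ∑ n ∈ K, (1/((∏ i : Fin d, b n i : ℕ):ℝ)) := by
        rw [← Finset.mul_sum]
    _ ≤ (d:ℝ) * (2*(N:ℝ)+1)^(d-1)
        + 2^d * (2*(N:ℝ)+1)^d * ∑' k, 1/((∏ i : Fin d, b (k+M) i : ℕ):ℝ) := by
        gcongr

end MBDAux

open Classical in
/-- Let `d ≥ 2` and for each coordinate `i` let `(b n i)ₙ` be a sequence of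
pairwise coprime positive integers.  Then the set
`ℤ^d \ ⋃ₙ (bₙ₁ℤ × ⋯ × bₙdℤ)` has density `∏ₙ (1 − 1/(bₙ₁⋯bₙd))` along the
boxes `{−N, …, N}^d`. -/
theorem multidim_bfree_density (d : ℕ) (hd : 2 ≤ d) (b : ℕ → Fin d → ℕ)
    (hpos : ∀ n i, 0 < b n i)
    (hcop : ∀ i : Fin d, ∀ m n, m ≠ n → Nat.Coprime (b m i) (b n i)) :
    Tendsto
      (fun N : ℕ =>
        (((Fintype.piFinset fun _ : Fin d => Finset.Icc (-(N : ℤ)) (N : ℤ)).filter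
          (fun x : Fin d → ℤ => ¬ ∃ n : ℕ, ∀ i : Fin d, (b n i : ℤ) ∣ x i)).card : ℝ)
          / (2 * N + 1) ^ d)
      atTop
      (nhds (∏' n : ℕ, (1 - 1 / ∏ i : Fin d, (b n i : ℝ)))) := by
  classical
  set f1 : ℕ → ℝ := fun n => 1 - 1/((∏ i : Fin d, b n i : ℕ):ℝ) with hf1
  have hB1 : ∀ n, 1 ≤ ∏ i : Fin d, b n i :=
    fun n => Finset.one_le_prod' (fun i _ => hpos n i)
  have hBR : ∀ n, (1:ℝ) ≤ ((∏ i : Fin d, b n i : ℕ):ℝ) := fun n => by exact_mod_cast hB1 n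
  have hBRpos : ∀ n, (0:ℝ) < ((∏ i : Fin d, b n i : ℕ):ℝ) :=
    fun n => lt_of_lt_of_le one_pos (hBR n)
  have h0f : ∀ n, 0 ≤ f1 n := by
    intro n
    have hinv : 1/((∏ i : Fin d, b n i : ℕ):ℝ) ≤ 1 := by
      rw [div_le_one (hBRpos n)]
      exact hBR n
    simp only [hf1]
    linarith
  have h1f : ∀ n, f1 n ≤ 1 := by
    intro n
    have : 0 ≤ 1/((∏ i : Fin d, b n i : ℕ):ℝ) := by positivity
    simp only [hf1]
    linarith
  set P : ℕ → ℝ := fun M => ∏ n ∈ Finset.range M, f1 n with hP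
  have hHP := MBD.hasProd_iInf h0f h1f
  set L : ℝ := ⨅ M : ℕ, P M with hL
  have hgoal_eq : (∏' n : ℕ, (1 - 1 / ∏ i : Fin d, (b n i : ℝ))) = L := by
    have hfun_eq : (fun n : ℕ => (1 - 1 / ∏ i : Fin d, (b n i : ℝ))) = f1 := by
      funext n
      simp only [hf1]
      rw [Nat.cast_prod]
    rw [hfun_eq]
    exact hHP.tprod_eq
  rw [hgoal_eq]
  have hP0 : ∀ M, 0 ≤ P M := fun M => Finset.prod_nonneg fun n _ => h0f n
  have hPanti : Antitone P := by
    apply antitone_nat_of_succ_le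
    intro M
    simp only [hP, Finset.prod_range_succ]
    exact mul_le_of_le_one_right (hP0 M) (h1f M)
  have hbddP : BddBelow (Set.range P) := ⟨0, by rintro _ ⟨M, rfl⟩; exact hP0 M⟩
  have hPL : Tendsto P atTop (nhds L) := tendsto_atTop_ciInf hPanti hbddP
  have hLP : ∀ M, L ≤ P M := fun M => ciInf_le hbddP M
  have hL0 : 0 ≤ L := le_ciInf hP0
  have hden : ∀ N : ℕ, (0:ℝ) < (2*(N:ℝ)+1)^d := fun N => by positivity
  have hmono : ∀ M N : ℕ,
      (((Fintype.piFinset fun _ : Fin d => Finset.Icc (-(N:ℤ)) (N:ℤ)).filter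
        (fun x : Fin d → ℤ => ¬ ∃ n : ℕ, ∀ i : Fin d, (b n i:ℤ) ∣ x i)).card : ℝ)
      ≤ (((Fintype.piFinset fun _ : Fin d => Finset.Icc (-(N:ℤ)) (N:ℤ)).filter
        (fun x : Fin d → ℤ => ∀ n ∈ Finset.range M, ¬ ∀ i, (b n i:ℤ) ∣ x i)).card : ℝ) := by
    intro M N
    refine Nat.cast_le.2 (Finset.card_le_card (Finset.monotone_filter_right _ ?_))
    intro x _ hne n _ hA
    exact hne ⟨n, hA⟩
  rw [Metric.tendsto_atTop]
  intro ε hε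
  rcases hL0.eq_or_lt with hLz | hLpos
  · -- L = 0
    obtain ⟨M, hM⟩ : ∃ M, P M < ε/2 := by
      have := (tendsto_order.1 hPL).2 (ε/2) (by rw [← hLz]; linarith)
      exact this.exists
    obtain ⟨N₀, hN₀⟩ := Metric.tendsto_atTop.1 (MBD.tendsto_gM b hpos hcop M) (ε/2) (by linarith)
    refine ⟨N₀, fun N hN => ?_⟩
    have hg := hN₀ N hN
    rw [Real.dist_eq] at hg ⊢
    rw [← hLz, sub_zero]
    set cF : ℝ := (((Fintype.piFinset fun _ : Fin d => Finset.Icc (-(N:ℤ)) (N:ℤ)).filter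
      (fun x : Fin d → ℤ => ¬ ∃ n : ℕ, ∀ i : Fin d, (b n i:ℤ) ∣ x i)).card : ℝ) with hcF
    set cM : ℝ := (((Fintype.piFinset fun _ : Fin d => Finset.Icc (-(N:ℤ)) (N:ℤ)).filter
      (fun x : Fin d → ℤ => ∀ n ∈ Finset.range M, ¬ ∀ i, (b n i:ℤ) ∣ x i)).card : ℝ) with hcM
    have hle1 : cF/(2*(N:ℝ)+1)^d ≤ cM/(2*(N:ℝ)+1)^d :=
      (div_le_div_iff_of_pos_right (hden N)).2 (hmono M N)
    have hnn : (0:ℝ) ≤ cF/(2*(N:ℝ)+1)^d := by positivity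
    rw [abs_of_nonneg hnn]
    have h5 : cM/(2*(N:ℝ)+1)^d - P M ≤ |cM/(2*(N:ℝ)+1)^d - P M| := le_abs_self _
    calc cF/(2*(N:ℝ)+1)^d ≤ cM/(2*(N:ℝ)+1)^d := hle1
      _ ≤ |cM/(2*(N:ℝ)+1)^d - P M| + P M := by linarith
      _ < ε/2 + ε/2 := add_lt_add hg hM
      _ = ε := by ring
  · -- 0 < L
    have hB2 : ∀ n, 2 ≤ ∏ i : Fin d, b n i := by
      intro n
      by_contra hlt
      push_neg at hlt
      have h1 : ∏ i : Fin d, b n i = 1 := le_antisymm (by omega) (hB1 n)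
      have hz : f1 n = 0 := by
        simp only [hf1]
        rw [h1]
        norm_num
      have hPz : P (n+1) = 0 :=
        Finset.prod_eq_zero (Finset.mem_range.2 (Nat.lt_succ_self n)) hz
      have := hLP (n+1)
      rw [hPz] at this
      linarith
    have hf1pos : ∀ n, 0 < f1 n := by
      intro n
      have h2 : (2:ℝ) ≤ ((∏ i : Fin d, b n i : ℕ):ℝ) := by exact_mod_cast hB2 n
      have hhalf : 1/((∏ i : Fin d, b n i : ℕ):ℝ) ≤ 1/2 := by
        apply one_div_le_one_div_of_le
        · norm_num
        · exact h2
      simp only [hf1]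
      linarith
    have hPpos : ∀ M, 0 < P M := fun M => Finset.prod_pos fun n _ => hf1pos n
    have hsum : Summable (fun n => 1/((∏ i : Fin d, b n i : ℕ):ℝ)) := by
      apply summable_of_sum_range_le (c := -Real.log L) (fun n => by positivity)
      intro M
      have hlogP : Real.log (P M) = ∑ n ∈ Finset.range M, Real.log (f1 n) :=
        Real.log_prod (fun n _ => (hf1pos n).ne')
      have hterm : ∀ n ∈ Finset.range M, 1/((∏ i : Fin d, b n i : ℕ):ℝ) ≤ -Real.log (f1 n) := by
        intro n _
        have := Real.log_le_sub_one_of_pos (hf1pos n)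
        simp only [hf1] at this ⊢
        linarith
      have hlogle : Real.log L ≤ Real.log (P M) :=
        (Real.log_le_log_iff hLpos (hPpos M)).2 (hLP M)
      calc ∑ n ∈ Finset.range M, 1/((∏ i : Fin d, b n i : ℕ):ℝ)
          ≤ ∑ n ∈ Finset.range M, (-Real.log (f1 n)) := Finset.sum_le_sum hterm
        _ = -Real.log (P M) := by rw [hlogP, ← Finset.sum_neg_distrib]
        _ ≤ -Real.log L := by linarith
    have htail : Tendsto (fun M : ℕ => (2:ℝ)^d * ∑' k, 1/((∏ i : Fin d, b (k+M) i : ℕ):ℝ))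
        atTop (nhds 0) := by
      have h := tendsto_sum_nat_add (f := fun n => 1/((∏ i : Fin d, b n i : ℕ):ℝ))
      simpa using h.const_mul ((2:ℝ)^d)
    have hev1 : ∀ᶠ M in atTop, P M < L + ε/4 := (tendsto_order.1 hPL).2 (L + ε/4) (by linarith)
    have hev2 : ∀ᶠ M in atTop, (2:ℝ)^d * ∑' k, 1/((∏ i : Fin d, b (k+M) i : ℕ):ℝ) < ε/4 :=
      (tendsto_order.1 htail).2 (ε/4) (by linarith)
    obtain ⟨M, hM1, hM2⟩ := (hev1.and hev2).exists
    have hdN : Tendsto (fun N : ℕ => (d:ℝ) * (2*(N:ℝ)+1)⁻¹) atTop (nhds 0) := by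
      simpa using MBD.tendsto_inv2N.const_mul (d:ℝ)
    have hε4 : (0:ℝ) < ε/4 := by linarith
    have hev3 : ∀ᶠ N : ℕ in atTop, (d:ℝ) * (2*(N:ℝ)+1)⁻¹ < ε/4 :=
      (tendsto_order.1 hdN).2 (ε/4) hε4
    have hev4 := Metric.tendsto_nhds.1 (MBD.tendsto_gM b hpos hcop M) (ε/4) (by linarith)
    obtain ⟨N₀, hN₀⟩ := eventually_atTop.1 (hev3.and hev4)
    refine ⟨N₀, fun N hN => ?_⟩
    obtain ⟨hd3, hg⟩ := hN₀ N hN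
    rw [Real.dist_eq] at hg
    set cF : ℝ := (((Fintype.piFinset fun _ : Fin d => Finset.Icc (-(N:ℤ)) (N:ℤ)).filter
      (fun x : Fin d → ℤ => ¬ ∃ n : ℕ, ∀ i : Fin d, (b n i:ℤ) ∣ x i)).card : ℝ) with hcF
    set cM : ℝ := (((Fintype.piFinset fun _ : Fin d => Finset.Icc (-(N:ℤ)) (N:ℤ)).filter
      (fun x : Fin d → ℤ => ∀ n ∈ Finset.range M, ¬ ∀ i, (b n i:ℤ) ∣ x i)).card : ℝ) with hcM
    have hup : cF/(2*(N:ℝ)+1)^d ≤ cM/(2*(N:ℝ)+1)^d :=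
      (div_le_div_iff_of_pos_right (hden N)).2 (hmono M N)
    have hlower := MBD.lower b hpos hcop hB2 hsum M N
    have hlowdiv : cM/(2*(N:ℝ)+1)^d - cF/(2*(N:ℝ)+1)^d
        ≤ (d:ℝ)*(2*(N:ℝ)+1)⁻¹
          + (2:ℝ)^d * ∑' k, 1/((∏ i : Fin d, b (k+M) i : ℕ):ℝ) := by
      have hstep := (div_le_div_iff_of_pos_right (hden N)).2 hlower
      rw [sub_div] at hstep
      have hsimp : ((d:ℝ)*(2*(N:ℝ)+1)^(d-1)
            + 2^d*(2*(N:ℝ)+1)^d * ∑' k, 1/((∏ i : Fin d, b (k+M) i : ℕ):ℝ))/(2*(N:ℝ)+1)^d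
          = (d:ℝ)*(2*(N:ℝ)+1)⁻¹
            + (2:ℝ)^d * ∑' k, 1/((∏ i : Fin d, b (k+M) i : ℕ):ℝ) := by
        have hA : (0:ℝ) < 2*(N:ℝ)+1 := by positivity
        have hdpow : (2*(N:ℝ)+1)^d = (2*(N:ℝ)+1)^(d-1) * (2*(N:ℝ)+1) := by
          rw [← pow_succ]
          congr 1
          omega
        rw [hdpow]
        field_simp
      rw [hsimp] at hstep
      exact hstep
    have h5 : cM/(2*(N:ℝ)+1)^d - P M ≤ |cM/(2*(N:ℝ)+1)^d - P M| := le_abs_self _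
    have h6 : P M - cM/(2*(N:ℝ)+1)^d ≤ |cM/(2*(N:ℝ)+1)^d - P M| := by
      rw [abs_sub_comm]
      exact le_abs_self _
    rw [Real.dist_eq, abs_sub_lt_iff]
    constructor
    · linarith [hLP M]
    · linarith [hLP M]
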